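/- Let m ≥ 1, let σ be a generator of Gal(𝔽_{q^m}/𝔽_q), and let a_1,…,a_{q−1} ∈ 𝔽_{q^m}^* have pairwise distinct norms N_{q^m/q}(a_i) (so the norms run over all of 𝔽_q^*). Let γ, δ ∈ 𝔽_{q^m}^*. Set U_i = {(y, a_i·σ(y)) : y ∈ 𝔽_{q^m}} for i ∈ {1,…,q−1}, U_0 = {(aγ, 0) : a ∈ 𝔽_q} and U_∞ = {(0, bδ) : b ∈ 𝔽_q}. Then for every one-dimensional 𝔽_{q^m}-subspace S of 𝔽_{q^m}² there exists exactly one index i ∈ {0, 1, …, q−1, ∞} with dim_{𝔽_q}(S ∩ U_i) = 1, and dim_{𝔽_q}(S ∩ U_j) = 0 for every j ≠ i. -/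

import Mathlib

/-- The `Fq`-linear map `y ↦ (y, a·σ(y))` from `Fqm` to `Fqm²`. -/
noncomputable def pairMap (Fq Fqm : Type) [Field Fq] [Field Fqm] [Algebra Fq Fqm]
    (σ : Fqm ≃ₐ[Fq] Fqm) (a : Fqm) : Fqm →ₗ[Fq] (Fin 2 → Fqm) where
  toFun y := fun j => if j = 0 then y else a * σ y
  map_add' x y := by
    funext j
    by_cases h : j = 0 <;> simp [h, map_add, mul_add]
  map_smul' c x := by
    funext j
    by_cases h : j = 0 <;> simp [h, _root_.map_smul, mul_smul_comm]

open Finset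

section Aux

variable {Fq Fqm : Type} [Field Fq] [Field Fqm] [Fintype Fq] [Fintype Fqm] [Algebra Fq Fqm]

lemma aux_sigma_pow (m : ℕ) (hm : Module.finrank Fq Fqm = m) (σ : Fqm ≃ₐ[Fq] Fqm) :
    σ ^ m = 1 := by
  haveI : FiniteDimensional Fq Fqm := Module.Finite.of_finite
  rw [← hm, ← IsGalois.card_aut_eq_finrank]
  exact pow_card_eq_one'

lemma aux_fixed (σ : Fqm ≃ₐ[Fq] Fqm) (hσ : ∀ τ : Fqm ≃ₐ[Fq] Fqm, τ ∈ Subgroup.zpowers σ)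
    (x : Fqm) (hx : σ x = x) : ∃ s : Fq, algebraMap Fq Fqm s = x := by
  haveI : FiniteDimensional Fq Fqm := Module.Finite.of_finite
  have hfix : ∀ τ : Fqm ≃ₐ[Fq] Fqm, τ x = x := by
    intro τ
    obtain ⟨n, rfl⟩ := ((isOfFinOrder_of_finite σ).mem_powers_iff_mem_zpowers).mpr (hσ τ)
    have : ∀ k : ℕ, (σ ^ k) x = x := by
      intro k
      induction k with
      | zero => rfl
      | succ k ih => rw [pow_succ, AlgEquiv.mul_apply, hx, ih]
    exact this n
  have hbot : IntermediateField.fixedField (⊤ : Subgroup (Fqm ≃ₐ[Fq] Fqm)) = ⊥ :=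
    ((IsGalois.tfae (F := Fq) (E := Fqm)).out 0 1).mp (inferInstance : IsGalois Fq Fqm)
  have : x ∈ IntermediateField.fixedField (⊤ : Subgroup (Fqm ≃ₐ[Fq] Fqm)) := fun g => hfix g
  rw [hbot, IntermediateField.mem_bot] at this
  obtain ⟨s, hs⟩ := this
  exact ⟨s, hs⟩

lemma aux_prod_fix (m : ℕ) (hm1 : 1 ≤ m) (σ : Fqm ≃ₐ[Fq] Fqm) (hσm : σ ^ m = 1) (x : Fqm) :
    σ (∏ l ∈ Finset.range m, (σ ^ l) x) = ∏ l ∈ Finset.range m, (σ ^ l) x := by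
  rcases eq_or_ne x 0 with rfl | hx
  · have h0 : (∏ l ∈ Finset.range m, (σ ^ l) (0 : Fqm)) = 0 :=
      Finset.prod_eq_zero (Finset.mem_range.mpr hm1) (map_zero _)
    rw [h0, map_zero]
  · have h1 : σ (∏ l ∈ Finset.range m, (σ ^ l) x) = ∏ l ∈ Finset.range m, (σ ^ (l + 1)) x := by
      rw [map_prod]
      exact Finset.prod_congr rfl fun l _ => by rw [pow_succ', AlgEquiv.mul_apply]
    have h2 : (∏ l ∈ Finset.range m, (σ ^ (l + 1)) x) * x
        = (∏ l ∈ Finset.range m, (σ ^ l) x) * x := by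
      have e1 := Finset.prod_range_succ' (fun l => (σ ^ l) x) m
      have e2 := Finset.prod_range_succ (fun l => (σ ^ l) x) m
      have e3 : (σ ^ m) x = x := by rw [hσm]; rfl
      simp only [pow_zero, AlgEquiv.one_apply] at e1
      rw [e3] at e2
      rw [← e1, e2]
    rw [h1, mul_right_cancel₀ hx h2]

lemma aux_prod_sigma (m : ℕ) (hm1 : 1 ≤ m) (σ : Fqm ≃ₐ[Fq] Fqm) (hσm : σ ^ m = 1) (x : Fqm) :
    (∏ l ∈ Finset.range m, (σ ^ l) (σ x)) = ∏ l ∈ Finset.range m, (σ ^ l) x := by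
  have h1 : (∏ l ∈ Finset.range m, (σ ^ l) (σ x)) = σ (∏ l ∈ Finset.range m, (σ ^ l) x) := by
    rw [map_prod]
    exact Finset.prod_congr rfl fun l _ => by
      rw [← AlgEquiv.mul_apply, ← pow_succ, pow_succ', AlgEquiv.mul_apply]
  rw [h1, aux_prod_fix m hm1 σ hσm]

end Aux

set_option linter.unusedSectionVars false in
lemma aux_key {Fq Fqm : Type} [Field Fq] [Field Fqm] [Fintype Fq] [Fintype Fqm] [Algebra Fq Fqm]
    (q m : ℕ) (hq : Fintype.card Fq = q) (hm : Module.finrank Fq Fqm = m) (hm1 : 1 ≤ m)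
    (σ : Fqm ≃ₐ[Fq] Fqm) (hσ : ∀ τ : Fqm ≃ₐ[Fq] Fqm, τ ∈ Subgroup.zpowers σ)
    (a : Fin (q - 1) → Fqm) (ha0 : ∀ i, a i ≠ 0)
    (hnorm : ∀ i j : Fin (q - 1),
      (∏ l ∈ Finset.range m, (σ ^ l) (a i)) = (∏ l ∈ Finset.range m, (σ ^ l) (a j)) → i = j)
    (c : Fqm) (hc : c ≠ 0) :
    ∃ i₀ : Fin (q - 1), (∃ y : Fqm, y ≠ 0 ∧ a i₀ * σ y = c * y) ∧
      ∀ i : Fin (q - 1), ∀ y : Fqm, y ≠ 0 → a i * σ y = c * y → i = i₀ := by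
  classical
  have hσm : σ ^ m = 1 := aux_sigma_pow m hm σ
  -- the norm on units
  set Nu : Fqmˣ →* Fqmˣ :=
    ∏ l ∈ Finset.range m, Units.map ((σ ^ l : Fqm ≃ₐ[Fq] Fqm) : Fqm →* Fqm) with hNu
  have hNuval : ∀ u : Fqmˣ, ((Nu u : Fqmˣ) : Fqm) = ∏ l ∈ Finset.range m, (σ ^ l) (u : Fqm) := by
    intro u
    rw [hNu, MonoidHom.finset_prod_apply, Units.coe_prod]
    exact Finset.prod_congr rfl fun l _ => rfl
  -- the map u ↦ σ(u)/u on units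
  set φ : Fqmˣ →* Fqmˣ := Units.map ((σ : Fqm ≃ₐ[Fq] Fqm) : Fqm →* Fqm) / MonoidHom.id Fqmˣ
    with hφ
  have hφval : ∀ u : Fqmˣ, ((φ u : Fqmˣ) : Fqm) = σ (u : Fqm) / (u : Fqm) := by
    intro u
    rw [hφ]
    simp
  have hmemker : ∀ u : Fqmˣ, u ∈ φ.ker ↔ σ (u : Fqm) = (u : Fqm) := by
    intro u
    rw [MonoidHom.mem_ker, Units.ext_iff, hφval, Units.val_one,
      div_eq_one_iff_eq (Units.ne_zero u)]
  have hNfix : ∀ u : Fqmˣ, Nu u ∈ φ.ker := by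
    intro u
    rw [hmemker, hNuval]
    exact aux_prod_fix m hm1 σ hσm _
  have hNsig : ∀ u : Fqmˣ, Nu (Units.map ((σ : Fqm ≃ₐ[Fq] Fqm) : Fqm →* Fqm) u) = Nu u := by
    intro u
    rw [Units.ext_iff, hNuval, hNuval, Units.coe_map]
    exact aux_prod_sigma m hm1 σ hσm _
  have hrange_le : φ.range ≤ Nu.ker := by
    rintro _ ⟨u, rfl⟩
    rw [MonoidHom.mem_ker, hφ, MonoidHom.div_apply, map_div, hNsig]
    simp
  -- cardinalities
  have hq2 : 1 < q := by
    rw [← hq]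
    exact Fintype.one_lt_card
  have hGcard : Nat.card Fqmˣ = q ^ m - 1 := by
    rw [Nat.card_eq_fintype_card, Fintype.card_units, Module.card_eq_pow_finrank (K := Fq) (V := Fqm),
      hq, hm]
  have hfirstiso : ∀ f : Fqmˣ →* Fqmˣ, Nat.card Fqmˣ = Nat.card f.range * Nat.card f.ker := by
    intro f
    rw [Subgroup.card_eq_card_quotient_mul_card_subgroup f.ker,
      Nat.card_congr (QuotientGroup.quotientKerEquivRange f).toEquiv]
  have hkerφcard : Nat.card φ.ker = q - 1 := by
    let e : Fqˣ → φ.ker := fun s =>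
      ⟨Units.map (algebraMap Fq Fqm : Fq →* Fqm) s, by
        rw [hmemker, Units.coe_map]
        exact σ.commutes s⟩
    have hbij : Function.Bijective e := by
      constructor
      · intro s t hst
        have := Subtype.ext_iff.mp hst
        exact Units.map_injective (algebraMap Fq Fqm).injective this
      · rintro ⟨u, hu⟩
        rw [hmemker] at hu
        obtain ⟨s, hs⟩ := aux_fixed σ hσ _ hu
        have hs0 : s ≠ 0 := by
          rintro rfl
          rw [map_zero] at hs
          exact u.ne_zero hs.symm
        refine ⟨Units.mk0 s hs0, ?_⟩
        apply Subtype.ext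
        apply Units.ext
        exact hs
    rw [← Nat.card_congr (Equiv.ofBijective e hbij), Nat.card_eq_fintype_card,
      Fintype.card_units, hq]
  -- the map i ↦ N(aᵢ) into ker φ is bijective
  let g : Fin (q - 1) → φ.ker := fun i => ⟨Nu (Units.mk0 (a i) (ha0 i)), hNfix _⟩
  have hginj : Function.Injective g := by
    intro i j hij
    apply hnorm
    have := Subtype.ext_iff.mp hij
    have := Units.ext_iff.mp this
    rwa [hNuval, hNuval] at this
  have hgbij : Function.Bijective g := by
    rw [Nat.bijective_iff_injective_and_card]
    exact ⟨hginj, by rw [Nat.card_eq_fintype_card, Fintype.card_fin, hkerφcard]⟩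
  have hNurange : Nu.range = φ.ker := by
    apply le_antisymm
    · rintro _ ⟨u, rfl⟩
      exact hNfix u
    · intro k hk
      obtain ⟨i, hi⟩ := hgbij.2 ⟨k, hk⟩
      exact ⟨Units.mk0 (a i) (ha0 i), Subtype.ext_iff.mp hi⟩
  -- range φ = ker Nu by counting
  have hcard_eq : Nat.card φ.range = Nat.card Nu.ker := by
    have h1 := hfirstiso φ
    have h2 := hfirstiso Nu
    rw [hkerφcard] at h1
    rw [hNurange, hkerφcard, mul_comm] at h2
    have hpos : 0 < q - 1 := by omega
    exact Nat.eq_of_mul_eq_mul_right hpos (by rw [← h1, h2])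
  have hrange_eq : φ.range = Nu.ker :=
    Subgroup.eq_of_le_of_card_ge hrange_le (le_of_eq hcard_eq.symm)
  -- produce the index
  set cu : Fqmˣ := Units.mk0 c hc with hcu
  obtain ⟨i₀, hi₀⟩ := hgbij.2 ⟨Nu cu, hNfix cu⟩
  have hNi₀ : Nu (Units.mk0 (a i₀) (ha0 i₀)) = Nu cu := Subtype.ext_iff.mp hi₀
  refine ⟨i₀, ?_, ?_⟩
  · -- existence of y
    have hw : Nu (cu * (Units.mk0 (a i₀) (ha0 i₀))⁻¹) = 1 := by
      rw [map_mul, map_inv, ← hNi₀, mul_inv_cancel]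
    have : cu * (Units.mk0 (a i₀) (ha0 i₀))⁻¹ ∈ φ.range := by
      rw [hrange_eq, MonoidHom.mem_ker]
      exact hw
    obtain ⟨u, hu⟩ := this
    refine ⟨(u : Fqm), u.ne_zero, ?_⟩
    have hval : σ (u : Fqm) / (u : Fqm) = c / a i₀ := by
      rw [← hφval u, hu, Units.val_mul]
      simp [hcu, division_def]
    rw [div_eq_div_iff (Units.ne_zero u) (ha0 i₀)] at hval
    linear_combination hval
  · -- uniqueness
    intro i y hy0 hy
    have hmem : cu * (Units.mk0 (a i) (ha0 i))⁻¹ ∈ φ.range := by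
      refine ⟨Units.mk0 y hy0, ?_⟩
      apply Units.ext
      rw [hφval, Units.val_mul]
      simp only [hcu, Units.val_mk0, Units.val_inv_eq_inv_val, ← division_def]
      rw [div_eq_div_iff hy0 (ha0 i)]
      linear_combination hy
    have hker := hrange_le hmem
    rw [MonoidHom.mem_ker, map_mul, map_inv, mul_inv_eq_one] at hker
    apply hnorm
    have h1 := Units.ext_iff.mp (hker.symm.trans hNi₀.symm)
    rwa [hNuval, hNuval, Units.val_mk0, Units.val_mk0] at h1

lemma fin2_ext {α : Type*} {x y : Fin 2 → α} (h0 : x 0 = y 0) (h1 : x 1 = y 1) : x = y := by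
  funext j
  fin_cases j
  · exact h0
  · exact h1

/-- Lemma 4.2 of the paper: for the subspaces
`U i = {(y, aᵢσ(y))}` (`i = 1,…,q-1`, pairwise distinct norms), `U₀ = Fq·(γ,0)` and
`U∞ = Fq·(0,δ)`, every one-dimensional `Fqm`-subspace `S` of `Fqm²` meets exactly one of
them in dimension `1` and all the others trivially. -/
theorem disjoint_pseudoregulus_cover
    (Fq Fqm : Type) [Field Fq] [Field Fqm] [Fintype Fq] [Fintype Fqm] [Algebra Fq Fqm]
    (q m : ℕ) (hq : Fintype.card Fq = q) (hm : Module.finrank Fq Fqm = m) (hm1 : 1 ≤ m)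
    (σ : Fqm ≃ₐ[Fq] Fqm) (hσ : ∀ τ : Fqm ≃ₐ[Fq] Fqm, τ ∈ Subgroup.zpowers σ)
    (a : Fin (q - 1) → Fqm) (ha0 : ∀ i, a i ≠ 0)
    (hnorm : ∀ i j : Fin (q - 1),
      (∏ l ∈ Finset.range m, (σ ^ l) (a i)) = (∏ l ∈ Finset.range m, (σ ^ l) (a j)) → i = j)
    (γ δ : Fqm) (hγ : γ ≠ 0) (hδ : δ ≠ 0)
    (W : Fin (q - 1) ⊕ Fin 2 → Submodule Fq (Fin 2 → Fqm))
    (hW₁ : ∀ i, W (Sum.inl i) = (⊤ : Submodule Fq Fqm).map (pairMap Fq Fqm σ (a i)))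
    (hW₂ : W (Sum.inr 0) = Submodule.span Fq {fun j : Fin 2 => if j = 0 then γ else 0})
    (hW₃ : W (Sum.inr 1) = Submodule.span Fq {fun j : Fin 2 => if j = 0 then 0 else δ})
    (S : Submodule Fqm (Fin 2 → Fqm)) (hS : Module.finrank Fqm S = 1) :
    ∃ i : Fin (q - 1) ⊕ Fin 2,
      Module.finrank Fq ↥(Submodule.restrictScalars Fq S ⊓ W i) = 1 ∧
      ∀ j : Fin (q - 1) ⊕ Fin 2, j ≠ i →
        Module.finrank Fq ↥(Submodule.restrictScalars Fq S ⊓ W j) = 0 := by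
  classical
  have hmemW1 : ∀ i (x : Fin 2 → Fqm), x ∈ W (Sum.inl i) ↔
      ∃ y : Fqm, x = fun j => if j = 0 then y else a i * σ y := by
    intro i x
    rw [hW₁ i, Submodule.mem_map]
    constructor
    · rintro ⟨y, -, rfl⟩
      exact ⟨y, rfl⟩
    · rintro ⟨y, rfl⟩
      exact ⟨y, Submodule.mem_top, rfl⟩
  obtain ⟨v, hv0, hvall⟩ := finrank_eq_one_iff'.mp hS
  set v0 : Fin 2 → Fqm := (v : Fin 2 → Fqm) with hv0def
  have hv0ne : v0 ≠ 0 := fun h => hv0 (by exact_mod_cast Subtype.ext h)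
  have hmemS : ∀ x, x ∈ S ↔ ∃ t : Fqm, x = t • v0 := by
    intro x
    constructor
    · intro hx
      obtain ⟨t, ht⟩ := hvall ⟨x, hx⟩
      exact ⟨t, by rw [← Submodule.coe_smul, ht]⟩
    · rintro ⟨t, rfl⟩
      exact S.smul_mem t v.2
  by_cases h0 : v0 0 = 0
  · -- Case A : v0 0 = 0, choose i = inr 1
    have h1 : v0 1 ≠ 0 := by
      intro h1
      exact hv0ne (fin2_ext h0 h1)
    have hSmem : ∀ x : Fin 2 → Fqm, x ∈ S ↔ x 0 = 0 := by
      intro x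
      rw [hmemS]
      constructor
      · rintro ⟨t, rfl⟩
        show t * v0 0 = 0
        rw [h0, mul_zero]
      · intro hx
        refine ⟨x 1 / v0 1, fin2_ext ?_ ?_⟩
        · show x 0 = x 1 / v0 1 * v0 0
          rw [h0, mul_zero, hx]
        · show x 1 = x 1 / v0 1 * v0 1
          rw [div_mul_cancel₀ _ h1]
    refine ⟨Sum.inr 1, ?_, ?_⟩
    · have hinf : Submodule.restrictScalars Fq S ⊓ W (Sum.inr 1) = W (Sum.inr 1) := by
        rw [inf_eq_right, hW₃, Submodule.span_le, Set.singleton_subset_iff]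
        simp only [SetLike.mem_coe, Submodule.restrictScalars_mem]
        rw [hSmem]
        rfl
      rw [hinf, hW₃]
      refine finrank_span_singleton ?_
      intro h
      exact hδ (congrFun h 1)
    · rintro (i | k) hj
      · have hbot : Submodule.restrictScalars Fq S ⊓ W (Sum.inl i) = ⊥ := by
          rw [eq_bot_iff]
          intro x hx
          obtain ⟨hxS, hxW⟩ := Submodule.mem_inf.mp hx
          rw [Submodule.restrictScalars_mem, hSmem] at hxS
          obtain ⟨y, rfl⟩ := (hmemW1 i x).mp hxW
          have hy : y = 0 := hxS
          rw [Submodule.mem_bot]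
          refine fin2_ext ?_ ?_
          · show y = (0 : Fqm)
            exact hy
          · show a i * σ y = (0 : Fqm)
            rw [hy, map_zero, mul_zero]
        rw [hbot]
        exact finrank_bot Fq _
      · rcases (by decide : ∀ k : Fin 2, k = 0 ∨ k = 1) k with rfl | rfl
        · have hbot : Submodule.restrictScalars Fq S ⊓ W (Sum.inr 0) = ⊥ := by
            rw [eq_bot_iff]
            intro x hx
            obtain ⟨hxS, hxW⟩ := Submodule.mem_inf.mp hx
            rw [Submodule.restrictScalars_mem, hSmem] at hxS
            rw [hW₂, Submodule.mem_span_singleton] at hxW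
            obtain ⟨s, rfl⟩ := hxW
            rw [Submodule.mem_bot]
            refine fin2_ext ?_ ?_
            · exact hxS
            · show s • (0 : Fqm) = 0
              exact smul_zero s
          rw [hbot]
          exact finrank_bot Fq _
        · exact absurd rfl hj
  · by_cases h1 : v0 1 = 0
    · -- Case B : v0 1 = 0, choose i = inr 0
      have hSmem : ∀ x : Fin 2 → Fqm, x ∈ S ↔ x 1 = 0 := by
        intro x
        rw [hmemS]
        constructor
        · rintro ⟨t, rfl⟩
          show t * v0 1 = 0
          rw [h1, mul_zero]
        · intro hx
          refine ⟨x 0 / v0 0, fin2_ext ?_ ?_⟩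
          · show x 0 = x 0 / v0 0 * v0 0
            rw [div_mul_cancel₀ _ h0]
          · show x 1 = x 0 / v0 0 * v0 1
            rw [h1, mul_zero, hx]
      refine ⟨Sum.inr 0, ?_, ?_⟩
      · have hinf : Submodule.restrictScalars Fq S ⊓ W (Sum.inr 0) = W (Sum.inr 0) := by
          rw [inf_eq_right, hW₂, Submodule.span_le, Set.singleton_subset_iff]
          simp only [SetLike.mem_coe, Submodule.restrictScalars_mem]
          rw [hSmem]
          rfl
        rw [hinf, hW₂]
        refine finrank_span_singleton ?_
        intro h
        exact hγ (congrFun h 0)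
      · rintro (i | k) hj
        · have hbot : Submodule.restrictScalars Fq S ⊓ W (Sum.inl i) = ⊥ := by
            rw [eq_bot_iff]
            intro x hx
            obtain ⟨hxS, hxW⟩ := Submodule.mem_inf.mp hx
            rw [Submodule.restrictScalars_mem, hSmem] at hxS
            obtain ⟨y, rfl⟩ := (hmemW1 i x).mp hxW
            have hxS' : a i * σ y = 0 := hxS
            have hy : y = 0 := by
              rcases mul_eq_zero.mp hxS' with h | h
              · exact absurd h (ha0 i)
              · exact EmbeddingLike.map_eq_zero_iff.mp h
            rw [Submodule.mem_bot]
            refine fin2_ext ?_ ?_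
            · show y = (0 : Fqm)
              exact hy
            · show a i * σ y = (0 : Fqm)
              rw [hy, map_zero, mul_zero]
          rw [hbot]
          exact finrank_bot Fq _
        · rcases (by decide : ∀ k : Fin 2, k = 0 ∨ k = 1) k with rfl | rfl
          · exact absurd rfl hj
          · have hbot : Submodule.restrictScalars Fq S ⊓ W (Sum.inr 1) = ⊥ := by
              rw [eq_bot_iff]
              intro x hx
              obtain ⟨hxS, hxW⟩ := Submodule.mem_inf.mp hx
              rw [Submodule.restrictScalars_mem, hSmem] at hxS
              rw [hW₃, Submodule.mem_span_singleton] at hxW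
              obtain ⟨s, rfl⟩ := hxW
              rw [Submodule.mem_bot]
              refine fin2_ext ?_ ?_
              · show s • (0 : Fqm) = 0
                exact smul_zero s
              · exact hxS
            rw [hbot]
            exact finrank_bot Fq _
    · -- Case C : both coordinates nonzero
      set c : Fqm := v0 1 / v0 0 with hc_def
      have hc : c ≠ 0 := div_ne_zero h1 h0
      have hSmem : ∀ x : Fin 2 → Fqm, x ∈ S ↔ x 1 = c * x 0 := by
        intro x
        rw [hmemS]
        constructor
        · rintro ⟨t, rfl⟩
          show t * v0 1 = c * (t * v0 0)
          rw [hc_def]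
          field_simp
        · intro hx
          refine ⟨x 0 / v0 0, fin2_ext ?_ ?_⟩
          · show x 0 = x 0 / v0 0 * v0 0
            rw [div_mul_cancel₀ _ h0]
          · show x 1 = x 0 / v0 0 * v0 1
            rw [hx, hc_def]
            field_simp
      obtain ⟨i₀, ⟨y, hy0, hyeq⟩, huniq⟩ := aux_key q m hq hm hm1 σ hσ a ha0 hnorm c hc
      refine ⟨Sum.inl i₀, ?_, ?_⟩
      · set P : Fin 2 → Fqm := fun j => if j = 0 then y else a i₀ * σ y with hP
        have hPS : P ∈ S := by
          rw [hSmem]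
          show a i₀ * σ y = c * y
          exact hyeq
        have hPW : P ∈ W (Sum.inl i₀) := (hmemW1 i₀ P).mpr ⟨y, rfl⟩
        have heq : Submodule.restrictScalars Fq S ⊓ W (Sum.inl i₀)
            = Submodule.span Fq {P} := by
          apply le_antisymm
          · intro x hx
            obtain ⟨hxS, hxW⟩ := Submodule.mem_inf.mp hx
            rw [Submodule.restrictScalars_mem, hSmem] at hxS
            obtain ⟨z, rfl⟩ := (hmemW1 i₀ x).mp hxW
            have hxS' : a i₀ * σ z = c * z := hxS
            rcases eq_or_ne z 0 with rfl | hz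
            · have hzero : (fun j : Fin 2 => if j = 0 then (0:Fqm) else a i₀ * σ 0) = 0 := by
                refine fin2_ext ?_ ?_
                · rfl
                · show a i₀ * σ 0 = (0 : Fqm)
                  rw [map_zero, mul_zero]
              rw [hzero]
              exact Submodule.zero_mem _
            · have ha : a i₀ ≠ 0 := ha0 i₀
              have hσz : σ z = c * z / a i₀ := by
                field_simp
                linear_combination hxS'
              have hσy : σ y = c * y / a i₀ := by
                field_simp
                linear_combination hyeq
              have hfix : σ (z / y) = z / y := by
                rw [map_div₀, hσz, hσy]
                field_simp
              obtain ⟨s, hs⟩ := aux_fixed σ hσ _ hfix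
              have hz_eq : z = s • y := by
                rw [Algebra.smul_def, hs, div_mul_cancel₀ _ hy0]
              rw [Submodule.mem_span_singleton]
              refine ⟨s, ?_⟩
              refine fin2_ext ?_ ?_
              · show s • y = z
                exact hz_eq.symm
              · show s • (a i₀ * σ y) = a i₀ * σ z
                rw [hz_eq, map_smul, mul_smul_comm]
          · rw [Submodule.span_le, Set.singleton_subset_iff]
            exact Submodule.mem_inf.mpr ⟨hPS, hPW⟩
        rw [heq]
        refine finrank_span_singleton ?_
        intro h
        exact hy0 (congrFun h 0)
      · rintro (i | k) hj
        · have hii : i ≠ i₀ := fun h => hj (by rw [h])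
          have hbot : Submodule.restrictScalars Fq S ⊓ W (Sum.inl i) = ⊥ := by
            rw [eq_bot_iff]
            intro x hx
            obtain ⟨hxS, hxW⟩ := Submodule.mem_inf.mp hx
            rw [Submodule.restrictScalars_mem, hSmem] at hxS
            obtain ⟨z, rfl⟩ := (hmemW1 i x).mp hxW
            have hxS' : a i * σ z = c * z := hxS
            have hz : z = 0 := by
              by_contra hz
              exact hii (huniq i z hz hxS')
            rw [Submodule.mem_bot]
            refine fin2_ext ?_ ?_
            · show z = (0 : Fqm)
              exact hz
            · show a i * σ z = (0 : Fqm)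
              rw [hz, map_zero, mul_zero]
          rw [hbot]
          exact finrank_bot Fq _
        · rcases (by decide : ∀ k : Fin 2, k = 0 ∨ k = 1) k with rfl | rfl
          · have hbot : Submodule.restrictScalars Fq S ⊓ W (Sum.inr 0) = ⊥ := by
              rw [eq_bot_iff]
              intro x hx
              obtain ⟨hxS, hxW⟩ := Submodule.mem_inf.mp hx
              rw [Submodule.restrictScalars_mem, hSmem] at hxS
              rw [hW₂, Submodule.mem_span_singleton] at hxW
              obtain ⟨s, rfl⟩ := hxW
              have hx1 : (s • fun j : Fin 2 => if j = 0 then γ else 0) 1 = 0 := smul_zero s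
              rw [hx1] at hxS
              have hx0 : (s • fun j : Fin 2 => if j = 0 then γ else 0) 0 = 0 :=
                (mul_eq_zero.mp hxS.symm).resolve_left hc
              rw [Submodule.mem_bot]
              exact fin2_ext hx0 hx1
            rw [hbot]
            exact finrank_bot Fq _
          · have hbot : Submodule.restrictScalars Fq S ⊓ W (Sum.inr 1) = ⊥ := by
              rw [eq_bot_iff]
              intro x hx
              obtain ⟨hxS, hxW⟩ := Submodule.mem_inf.mp hx
              rw [Submodule.restrictScalars_mem, hSmem] at hxS
              rw [hW₃, Submodule.mem_span_singleton] at hxW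
              obtain ⟨s, rfl⟩ := hxW
              have hx0 : (s • fun j : Fin 2 => if j = 0 then (0:Fqm) else δ) 0 = 0 := smul_zero s
              rw [hx0, mul_zero] at hxS
              rw [Submodule.mem_bot]
              exact fin2_ext hx0 hxS
            rw [hbot]
            exact finrank_bot Fq _
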